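/- Define r(n) to be the number of symmetric zero-one sequences (a_1,...,a_n) of length n (i.e., a_i = a_{n+1-i}) such that the matrix product over ℤ/2ℤ of [[0,1],[1,0]] followed by [[a_i,1],[1,0]] for i = 1 to n does NOT have second column equal to (1,1)^T. Then r(2m) = ((-1)^m + 2^{m+1})/3 and r(2m+1) = ((-1)^m + 5*2^m)/3. -/

import Mathlib

open Matrix in
/-- The number of permissible symmetric zero-one sequences of length `n`. -/
noncomputable def permissibleCount (n : ℕ) : ℕ :=
  letI := Classical.decEq (Matrix (Fin 2) (Fin 2) (ZMod 2))
  letI := fun p : Prop => Classical.propDecidable p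
  (Finset.univ.filter fun a : Fin n → ZMod 2 =>
    (∀ i j : Fin n, (i : ℕ) + (j : ℕ) = n - 1 → a i = a j) ∧
      ¬ (((!![(0 : ZMod 2), 1; 1, 0]) *
            (List.ofFn fun i : Fin n => !![a i, 1; 1, 0]).prod) 0 1 = 1 ∧
          ((!![(0 : ZMod 2), 1; 1, 0]) *
            (List.ofFn fun i : Fin n => !![a i, 1; 1, 0]).prod) 1 1 = 1)).card

open Matrix Finset

abbrev M2 := Matrix (Fin 2) (Fin 2) (ZMod 2)

def Mx (a : ZMod 2) : M2 := !![a, 1; 1, 0]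
def Ms : M2 := !![0, 1; 1, 0]
def Mt : M2 := !![0, 1; 1, 1]
def Mu : M2 := !![1, 1; 1, 0]
def Mr : M2 := !![1, 1; 0, 1]
def Mr' : M2 := !![1, 0; 1, 1]

def prodA (n : ℕ) (a : Fin n → ZMod 2) : M2 := (List.ofFn fun i => Mx (a i)).prod

def Pal (n : ℕ) (a : Fin n → ZMod 2) : Prop :=
  ∀ i j : Fin n, (i : ℕ) + (j : ℕ) = n - 1 → a i = a j

instance (n : ℕ) : DecidablePred (Pal n) := fun _ => by unfold Pal; infer_instance

def B (n : ℕ) (g : M2) : ℕ :=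
  (Finset.univ.filter fun a : Fin n → ZMod 2 => Pal n a ∧ prodA n a = g).card

lemma zmod2_cases (z : ZMod 2) : z = 0 ∨ z = 1 := by revert z; decide

lemma det_Mx (x : ZMod 2) : (Mx x).det = 1 := by
  rw [Mx, Matrix.det_fin_two_of]
  rcases zmod2_cases x with h | h <;> rw [h] <;> decide

lemma det_prodA (n : ℕ) (a : Fin n → ZMod 2) : (prodA n a).det = 1 := by
  have h := MonoidHom.map_list_prod (Matrix.detMonoidHom) (List.ofFn fun i => Mx (a i))
  rw [Matrix.coe_detMonoidHom] at h
  rw [prodA, h, List.map_ofFn]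
  apply List.prod_eq_one
  intro m hm
  rw [List.mem_ofFn] at hm
  obtain ⟨i, rfl⟩ := hm
  exact det_Mx (a i)

lemma good_iff (P : M2) (h : P.det = 1) :
    ¬((Ms * P) 0 1 = 1 ∧ (Ms * P) 1 1 = 1) ↔
      P = 1 ∨ P = Ms ∨ P = Mu ∨ P = Mr' := by
  simp only [Ms]
  rw [Matrix.eta_fin_two P] at h ⊢
  revert h
  generalize P 0 0 = a
  generalize P 0 1 = b
  generalize P 1 0 = c
  generalize P 1 1 = d
  revert a b c d
  decide

section Structural
variable {n : ℕ} (x : ZMod 2) (p : Fin n → ZMod 2)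

def G (x : ZMod 2) (p : Fin n → ZMod 2) : Fin (n + 2) → ZMod 2 :=
  Fin.cons x (Fin.snoc p x)

lemma G_zero : G x p 0 = x := rfl

lemma G_last : G x p (Fin.last (n + 1)) = x := by
  rw [G, ← Fin.succ_last, Fin.cons_succ, Fin.snoc_last]

lemma G_mid (i : Fin n) : G x p i.succ.castSucc = p i := by
  rw [G, ← Fin.succ_castSucc, Fin.cons_succ, Fin.snoc_castSucc]

lemma prodA_G : prodA (n + 2) (G x p) = Mx x * prodA n p * Mx x := by
  rw [prodA, List.ofFn_succ, List.ofFn_succ']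
  simp only [Fin.succ_castSucc]
  rw [List.prod_cons, List.prod_concat]
  simp only [G, ← Fin.succ_castSucc, ← Fin.succ_last, Fin.cons_succ, Fin.snoc_castSucc,
    Fin.snoc_last, Fin.cons_zero]
  rw [prodA, mul_assoc]

lemma pal_G (hp : Pal n p) : Pal (n + 2) (G x p) := by
  intro i j hij
  have hij : (i : ℕ) + (j : ℕ) = n + 1 := by omega
  have hi := i.isLt
  have hj := j.isLt
  rcases Nat.eq_zero_or_pos (i : ℕ) with h0 | h0
  · have : i = 0 := Fin.ext h0
    have : j = Fin.last (n + 1) := Fin.ext (by simp [Fin.last]; omega)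
    subst this
    rw [show i = 0 from Fin.ext h0, G_zero, G_last]
  · rcases Nat.eq_zero_or_pos (j : ℕ) with h0' | h0'
    · have : j = 0 := Fin.ext h0'
      have hi' : i = Fin.last (n + 1) := Fin.ext (by simp [Fin.last]; omega)
      subst this; subst hi'
      rw [G_zero, G_last]
    · have hi1 : (i : ℕ) - 1 < n := by omega
      have hj1 : (j : ℕ) - 1 < n := by omega
      have hieq : i = (⟨(i : ℕ) - 1, hi1⟩ : Fin n).succ.castSucc := by
        apply Fin.ext; simp; omega
      have hjeq : j = (⟨(j : ℕ) - 1, hj1⟩ : Fin n).succ.castSucc := by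
        apply Fin.ext; simp; omega
      rw [hieq, hjeq, G_mid, G_mid]
      exact hp _ _ (by simp; omega)

lemma pal_of_G {a : Fin (n + 2) → ZMod 2} (ha : Pal (n + 2) a) :
    Pal n (fun i => a i.succ.castSucc) := by
  intro i j hij
  exact ha i.succ.castSucc j.succ.castSucc (by simp [Fin.val_succ]; omega)

lemma eq_G_of_pal {a : Fin (n + 2) → ZMod 2} (ha : Pal (n + 2) a) :
    a = G (a 0) (fun i => a i.succ.castSucc) := by
  funext t
  have ht := t.isLt
  rcases Nat.eq_zero_or_pos (t : ℕ) with h0 | h0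
  · rw [show t = 0 from Fin.ext h0, G_zero]
  · rcases Nat.lt_or_ge (t : ℕ) (n + 1) with h1 | h1
    · have ht1 : (t : ℕ) - 1 < n := by omega
      have hteq : t = (⟨(t : ℕ) - 1, ht1⟩ : Fin n).succ.castSucc := by
        apply Fin.ext; simp; omega
      rw [hteq, G_mid]
    · have : t = Fin.last (n + 1) := Fin.ext (by simp [Fin.last]; omega)
      subst this
      rw [G_last]
      exact ha _ _ (by simp [Fin.last])

end Structural

lemma B_split (n : ℕ) (g : M2) (x : ZMod 2) (h : M2) (hh : Mx x * h = 1) (hh' : h * Mx x = 1) :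
    (Finset.univ.filter fun a : Fin (n + 2) → ZMod 2 =>
        (Pal (n + 2) a ∧ prodA (n + 2) a = g) ∧ a 0 = x).card = B n (h * g * h) := by
  rw [B]
  apply Finset.card_bij' (fun a _ => fun i : Fin n => a i.succ.castSucc) (fun p _ => G x p)
  · intro a ha
    simp only [Finset.mem_filter, Finset.mem_univ, true_and] at ha ⊢
    obtain ⟨⟨hpal, hprod⟩, h0⟩ := ha
    refine ⟨pal_of_G hpal, ?_⟩
    have hG : a = G x (fun i => a i.succ.castSucc) := by rw [← h0]; exact eq_G_of_pal hpal
    rw [hG, prodA_G] at hprod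
    rw [← hprod]
    rw [show h * (Mx x * prodA n (fun i => a i.succ.castSucc) * Mx x) * h
        = (h * Mx x) * prodA n (fun i => a i.succ.castSucc) * (Mx x * h) by
          simp only [mul_assoc],
      hh, hh', one_mul, mul_one]
  · intro p hp
    simp only [Finset.mem_filter, Finset.mem_univ, true_and] at hp ⊢
    obtain ⟨hpal, hprod⟩ := hp
    refine ⟨⟨pal_G x p hpal, ?_⟩, rfl⟩
    rw [prodA_G, hprod,
      show Mx x * (h * g * h) * Mx x = (Mx x * h) * g * (h * Mx x) by simp only [mul_assoc],
      hh, hh', one_mul, mul_one]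
  · intro a ha
    simp only [Finset.mem_filter, Finset.mem_univ, true_and] at ha
    obtain ⟨⟨hpal, _⟩, h0⟩ := ha
    rw [← h0]
    exact (eq_G_of_pal hpal).symm
  · intro p _
    funext i
    exact G_mid x p i

lemma B_rec (n : ℕ) (g : M2) : B (n + 2) g = B n (Ms * g * Ms) + B n (Mt * g * Mt) := by
  have key := Finset.card_filter_add_card_filter_not
    (s := Finset.univ.filter fun a : Fin (n + 2) → ZMod 2 => Pal (n + 2) a ∧ prodA (n + 2) a = g)
    (p := fun a => a 0 = 0)
  rw [B, ← key, Finset.filter_filter, Finset.filter_filter]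
  congr 1
  · exact B_split n g 0 Ms (by decide) (by decide)
  · rw [← B_split n g 1 Mt (by decide) (by decide)]
    congr 1
    apply Finset.filter_congr
    intro a _
    refine and_congr_right fun _ => ?_
    have := zmod2_cases (a 0)
    constructor
    · intro hn
      rcases this with h | h
      · exact absurd h hn
      · exact h
    · intro h1 h0; rw [h0] at h1; exact absurd h1 (by decide)

def JK : ℕ → ℕ × ℕ
  | 0 => (0, 1)
  | k + 1 => ((JK k).1 + (JK k).2, 2 * (JK k).1)

lemma B_vals (k : ℕ) :
    (B (2 * k + 1) 1 = (JK k).1 ∧ B (2 * k + 1) Ms = 2 ^ k ∧ B (2 * k + 1) Mt = (JK k).1 ∧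
      B (2 * k + 1) Mu = (JK k).2 ∧ B (2 * k + 1) Mr = 0 ∧ B (2 * k + 1) Mr' = 0) ∧
    (B (2 * k + 2) 1 = (JK (k + 1)).1 ∧ B (2 * k + 2) Ms = 0 ∧
      B (2 * k + 2) Mt = (JK (k + 1)).1 ∧ B (2 * k + 2) Mu = (JK (k + 1)).2 ∧
      B (2 * k + 2) Mr = 0 ∧ B (2 * k + 2) Mr' = 0) := by
  have hm1 : Ms * 1 * Ms = 1 := by decide
  have hm2 : Mt * 1 * Mt = Mu := by decide
  have hm3 : Ms * Ms * Ms = Ms := by decide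
  have hm4 : Mt * Ms * Mt = Ms := by decide
  have hm5 : Ms * Mt * Ms = Mu := by decide
  have hm6 : Mt * Mt * Mt = 1 := by decide
  have hm7 : Ms * Mu * Ms = Mt := by decide
  have hm8 : Mt * Mu * Mt = Mt := by decide
  have hm9 : Ms * Mr * Ms = Mr' := by decide
  have hm10 : Mt * Mr * Mt = Mr := by decide
  have hm11 : Ms * Mr' * Ms = Mr := by decide
  have hm12 : Mt * Mr' * Mt = Mr' := by decide
  induction k with
  | zero => exact ⟨by decide, by decide⟩
  | succ k ih =>
    obtain ⟨⟨o1, o2, o3, o4, o5, o6⟩, ⟨e1, e2, e3, e4, e5, e6⟩⟩ := ih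
    have h2 : 2 * (k + 1) + 1 = (2 * k + 1) + 2 := by ring
    have h3 : 2 * (k + 1) + 2 = (2 * k + 2) + 2 := by ring
    constructor
    · refine ⟨?_, ?_, ?_, ?_, ?_, ?_⟩ <;> rw [h2, B_rec]
      · rw [hm1, hm2, o1, o4]; rfl
      · rw [hm3, hm4, o2]; ring
      · rw [hm5, hm6, o4, o1]; simp [JK]; ring
      · rw [hm7, hm8, o3]; simp [JK]; ring
      · rw [hm9, hm10, o6, o5]
      · rw [hm11, hm12, o5, o6]
    · refine ⟨?_, ?_, ?_, ?_, ?_, ?_⟩ <;> rw [h3, B_rec]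
      · rw [hm1, hm2, e1, e4]; rfl
      · rw [hm3, hm4, e2]
      · rw [hm5, hm6, e4, e1]; simp [JK]; ring
      · rw [hm7, hm8, e3]; simp [JK]; ring
      · rw [hm9, hm10, e6, e5]
      · rw [hm11, hm12, e5, e6]

lemma JK_closed (k : ℕ) :
    3 * ((JK k).1 : ℤ) = 2 ^ k - (-1) ^ k ∧ 3 * ((JK k).2 : ℤ) = 2 ^ k + 2 * (-1) ^ k := by
  induction k with
  | zero => norm_num [JK]
  | succ k ih =>
    obtain ⟨h1, h2⟩ := ih
    constructor
    · show 3 * (((JK k).1 + (JK k).2 : ℕ) : ℤ) = _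
      push_cast
      linear_combination h1 + h2
    · show 3 * ((2 * (JK k).1 : ℕ) : ℤ) = _
      push_cast
      linear_combination 2 * h1
lemma count_eq (n : ℕ) : permissibleCount n = B n 1 + B n Ms + B n Mu + B n Mr' := by
  have h1 : permissibleCount n = (Finset.univ.filter fun a : Fin n → ZMod 2 =>
      Pal n a ∧ ¬((Ms * prodA n a) 0 1 = 1 ∧ (Ms * prodA n a) 1 1 = 1)).card := by
    have hD : ∀ m : ℕ, (fun (a b : Fin m) => (fun p : Prop => Classical.propDecidable p) (a = b))
        = instDecidableEqFin m := fun m => Subsingleton.elim _ _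
    unfold permissibleCount
    rw [Finset.filter_congr_decidable]
    congr 1
    ext a
    rw [Finset.mem_filter, Finset.mem_filter]
    simp only [Finset.mem_univ, true_and]
    unfold Pal Ms prodA Mx
    congr!
  rw [h1]
  have hmem : ∀ a ∈ (Finset.univ.filter fun a : Fin n → ZMod 2 =>
      Pal n a ∧ ¬((Ms * prodA n a) 0 1 = 1 ∧ (Ms * prodA n a) 1 1 = 1)),
      prodA n a ∈ ({1, Ms, Mu, Mr'} : Finset M2) := by
    intro a ha
    rw [Finset.mem_filter] at ha
    have := (good_iff (prodA n a) (det_prodA n a)).mp ha.2.2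
    simpa using this
  rw [Finset.card_eq_sum_card_fiberwise hmem]
  have hsplit : ∀ g : M2, (g = 1 ∨ g = Ms ∨ g = Mu ∨ g = Mr') →
      ((Finset.univ.filter fun a : Fin n → ZMod 2 =>
        Pal n a ∧ ¬((Ms * prodA n a) 0 1 = 1 ∧ (Ms * prodA n a) 1 1 = 1)).filter
          fun a => prodA n a = g).card = B n g := by
    intro g hg
    rw [Finset.filter_filter, B]
    congr 1
    apply Finset.filter_congr
    intro a _
    constructor
    · rintro ⟨⟨hp, _⟩, he⟩; exact ⟨hp, he⟩
    · rintro ⟨hp, he⟩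
      refine ⟨⟨hp, ?_⟩, he⟩
      rw [good_iff (prodA n a) (det_prodA n a), he]
      exact hg
  rw [show ({1, Ms, Mu, Mr'} : Finset M2) = insert 1 (insert Ms (insert Mu {Mr'})) from rfl]
  rw [Finset.sum_insert (by decide), Finset.sum_insert (by decide),
    Finset.sum_insert (by decide), Finset.sum_singleton]
  rw [hsplit 1 (by tauto), hsplit Ms (by tauto), hsplit Mu (by tauto), hsplit Mr' (by tauto)]
  ring

/-- `r(2m) = ((-1)^m + 2^(m+1))/3` and `r(2m+1) = ((-1)^m + 5·2^m)/3`. -/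
theorem permissibleCount_formula (m : ℕ) :
    3 * (permissibleCount (2 * m) : ℤ) = (-1) ^ m + 2 ^ (m + 1) ∧
      3 * (permissibleCount (2 * m + 1) : ℤ) = (-1) ^ m + 5 * 2 ^ m := by
  constructor
  · cases m with
    | zero =>
      have h0 : permissibleCount 0 = 1 := by
        rw [count_eq]
        decide
      rw [h0]; norm_num
    | succ k =>
      obtain ⟨_, e1, e2, _, e4, _, e6⟩ := B_vals k
      have hn : 2 * (k + 1) = 2 * k + 2 := by ring
      rw [count_eq, hn, e1, e2, e4, e6]
      obtain ⟨c1, c2⟩ := JK_closed (k + 1)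
      push_cast
      linear_combination c1 + c2
  · obtain ⟨⟨o1, o2, o3, o4, o5, o6⟩, _⟩ := B_vals m
    rw [count_eq, o1, o2, o4, o6]
    obtain ⟨c1, c2⟩ := JK_closed m
    push_cast
    linear_combination c1 + c2
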